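/- Let {s_k} be least nonnegative residues mod m. If ∑_{k=0}^∞ (m/(m+1))^k s_k converges to 0 in D_m with the m-adic metric, then s_k = 0 for all k. Consequently, two such series with the same limit have equal coefficient sequences. -/

import Mathlib

def Dm (m : ℕ) : Set ℚ := {q : ℚ | Nat.Coprime q.den m}

noncomputable def mnorm (m : ℕ) (q : ℚ) : ℝ :=
  if q = 0 then 0 else (m : ℝ) ^ (-(m.maxPowDiv q.num.natAbs : ℤ))

noncomputable def mdist (m : ℕ) (x y : ℚ) : ℝ := mnorm m (x - y)

lemma int_pow_dvd_of_natAbs {m k : ℕ} {a : ℤ} (h : m ^ k ∣ a.natAbs) : (m : ℤ)^k ∣ a := by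
  have := Int.natCast_dvd_natCast.mpr h
  rw [Int.dvd_natAbs] at this
  exact_mod_cast this

lemma natAbs_dvd_of_int {m k : ℕ} {a : ℤ} (h : (m : ℤ)^k ∣ a) : m ^ k ∣ a.natAbs := by
  have := Int.natAbs_dvd_natAbs.mpr h
  simpa [Int.natAbs_pow] using this

lemma mnorm_nonneg (m : ℕ) (q : ℚ) : 0 ≤ mnorm m q := by
  unfold mnorm; split
  · exact le_refl 0
  · exact zpow_nonneg (by positivity) _

lemma mnorm_neg (m : ℕ) (q : ℚ) : mnorm m (-q) = mnorm m q := by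
  unfold mnorm
  simp [neg_eq_zero, Rat.neg_num, Int.natAbs_neg]

lemma coprime_den (m k : ℕ) {q : ℚ} (h : (m : ℤ)^k ∣ q.num) :
    IsCoprime ((m : ℤ)^k) (q.den : ℤ) := by
  have h2 : Nat.Coprime (m ^ k) q.den :=
    Nat.Coprime.coprime_dvd_left (natAbs_dvd_of_int h) q.reduced
  have := h2.isCoprime
  simpa using this

lemma dvd_num_add (m k : ℕ) {x y : ℚ} (hx : (m : ℤ)^k ∣ x.num) (hy : (m : ℤ)^k ∣ y.num) :
    (m : ℤ)^k ∣ (x + y).num := by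
  have E := Rat.add_num_den' x y
  have hdvd : (m : ℤ)^k ∣ (x + y).num * x.den * y.den := by
    rw [E]
    exact Dvd.dvd.mul_right (dvd_add (hx.mul_right _) (hy.mul_right _)) _
  exact (coprime_den m k hx).dvd_of_dvd_mul_right ((coprime_den m k hy).dvd_of_dvd_mul_right hdvd)

lemma mnorm_le_of_dvd {m : ℕ} (hm : 2 ≤ m) {q : ℚ} {k : ℕ} (h : (m : ℤ)^k ∣ q.num) :
    mnorm m q ≤ (m : ℝ) ^ (-(k : ℤ)) := by
  unfold mnorm
  split
  · exact zpow_nonneg (by positivity) _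
  · rename_i hq
    have hnum : q.num ≠ 0 := Rat.num_ne_zero.mpr hq
    have hpos : 0 < q.num.natAbs := Int.natAbs_pos.mpr hnum
    have hle : k ≤ m.maxPowDiv q.num.natAbs :=
      (Nat.pow_dvd_iff_le_padicValNat (p := m) (by omega) hpos.ne').mp (natAbs_dvd_of_int h)
    have hm1 : (1 : ℝ) ≤ (m : ℝ) := by exact_mod_cast Nat.one_le_of_lt hm
    exact zpow_le_zpow_right₀ hm1 (by exact_mod_cast neg_le_neg (by exact_mod_cast hle))

lemma mnorm_add_le {m : ℕ} (hm : 2 ≤ m) (x y : ℚ) :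
    mnorm m (x + y) ≤ mnorm m x + mnorm m y := by
  by_cases hx : x = 0
  · simp [hx, mnorm_nonneg, mnorm]
  by_cases hy : y = 0
  · simp [hy, mnorm_nonneg, mnorm]
  set kx := m.maxPowDiv x.num.natAbs with hkx
  set ky := m.maxPowDiv y.num.natAbs with hky
  have hxd : (m : ℤ)^(min kx ky) ∣ x.num :=
    int_pow_dvd_of_natAbs ((pow_dvd_pow _ (min_le_left _ _)).trans (Nat.maxPowDiv.pow_dvd))
  have hyd : (m : ℤ)^(min kx ky) ∣ y.num :=
    int_pow_dvd_of_natAbs ((pow_dvd_pow _ (min_le_right _ _)).trans (Nat.maxPowDiv.pow_dvd))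
  have h1 : mnorm m (x + y) ≤ (m : ℝ) ^ (-((min kx ky : ℕ) : ℤ)) :=
    mnorm_le_of_dvd hm (dvd_num_add m _ hxd hyd)
  refine h1.trans ?_
  rcases min_choice kx ky with h | h <;> rw [h]
  · have : (m : ℝ) ^ (-(kx : ℤ)) = mnorm m x := by rw [mnorm, if_neg hx]
    rw [this]
    exact le_add_of_nonneg_right (mnorm_nonneg m y)
  · have : (m : ℝ) ^ (-(ky : ℤ)) = mnorm m y := by rw [mnorm, if_neg hy]
    rw [this]
    exact le_add_of_nonneg_left (mnorm_nonneg m x)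

lemma core (m : ℕ) (hm : 2 ≤ m) (u : ℕ → ℤ) (hu : ∀ k, (u k).natAbs ≤ m - 1)
    (h : Filter.Tendsto
      (fun n => mnorm m (∑ k ∈ Finset.range n, ((m : ℚ) / ((m : ℚ) + 1)) ^ k * (u k : ℚ)))
      Filter.atTop (nhds 0)) :
    ∀ k, u k = 0 := by
  by_contra hc
  push_neg at hc
  -- minimal nonzero index
  classical
  set j := Nat.find hc with hj
  have hj0 : u j ≠ 0 := Nat.find_spec hc
  have hjmin : ∀ k < j, u k = 0 := fun k hk => by
    have := Nat.find_min hc hk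
    simpa using this
  have hm1Q : ((m : ℚ) + 1) ≠ 0 := by positivity
  have hcop : IsCoprime ((m : ℤ)) ((m : ℤ) + 1) := ⟨-1, 1, by ring⟩
  -- the integer numerator
  set N : ℕ → ℤ := fun n => ∑ k ∈ Finset.range n, u k * (m : ℤ)^k * ((m : ℤ) + 1)^(n - k)
    with hN
  have key : ∀ n, ((m : ℚ) + 1)^n * (∑ k ∈ Finset.range n, ((m : ℚ) / ((m : ℚ) + 1)) ^ k * (u k : ℚ))
      = ((N n : ℤ) : ℚ) := by
    intro n
    rw [hN]
    push_cast
    rw [Finset.mul_sum]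
    refine Finset.sum_congr rfl (fun k hk => ?_)
    have hkn : k < n := Finset.mem_range.mp hk
    rw [div_pow]
    have : ((m : ℚ) + 1)^n = ((m : ℚ) + 1)^(n - k) * ((m : ℚ) + 1)^k := by
      rw [← pow_add, Nat.sub_add_cancel hkn.le]
    rw [this]
    field_simp
  -- divisibility facts about N n
  have hNdvd : ∀ n, (m : ℤ)^j ∣ N n := by
    intro n
    refine Finset.dvd_sum (fun k hk => ?_)
    rcases lt_or_ge k j with hkj | hkj
    · rw [hjmin k hkj]; simp
    · exact ((pow_dvd_pow (m : ℤ) hkj).trans (Dvd.intro_left _ rfl)).mul_right _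
  have hNnot : ∀ n, j < n → ¬ (m : ℤ)^(j + 1) ∣ N n := by
    intro n hjn hdvd
    have hmem : j ∈ Finset.range n := Finset.mem_range.mpr hjn
    have hsplit : N n = u j * (m : ℤ)^j * ((m : ℤ) + 1)^(n - j)
        + ∑ k ∈ (Finset.range n).erase j, u k * (m : ℤ)^k * ((m : ℤ) + 1)^(n - k) :=
      (Finset.add_sum_erase _ _ hmem).symm
    have hrest : (m : ℤ)^(j + 1) ∣ ∑ k ∈ (Finset.range n).erase j,
        u k * (m : ℤ)^k * ((m : ℤ) + 1)^(n - k) := by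
      refine Finset.dvd_sum (fun k hk => ?_)
      obtain ⟨hkj, hkn⟩ := Finset.mem_erase.mp hk
      rcases lt_or_ge k j with h1 | h1
      · rw [hjmin k h1]; simp
      · have : j + 1 ≤ k := lt_of_le_of_ne h1 (Ne.symm hkj)
        exact ((pow_dvd_pow (m : ℤ) this).trans (Dvd.intro_left _ rfl)).mul_right _
    have hterm : (m : ℤ)^(j + 1) ∣ u j * (m : ℤ)^j * ((m : ℤ) + 1)^(n - j) := by
      have := dvd_sub hdvd hrest
      rw [hsplit] at this
      simpa using this
    have hmj : (m : ℤ) ∣ u j * ((m : ℤ) + 1)^(n - j) := by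
      have h0 : ((m : ℤ)^j) ≠ 0 := pow_ne_zero _ (by exact_mod_cast (by omega : m ≠ 0))
      have h2 : (m : ℤ)^j * (m : ℤ) ∣ (m : ℤ)^j * (u j * ((m : ℤ) + 1)^(n - j)) := by
        rw [← pow_succ]
        have he : (m : ℤ)^j * (u j * ((m : ℤ) + 1)^(n - j))
            = u j * (m : ℤ)^j * ((m : ℤ) + 1)^(n - j) := by ring
        rw [he]; exact hterm
      exact (mul_dvd_mul_iff_left h0).mp h2
    have hmuj : (m : ℤ) ∣ u j := (hcop.pow_right).dvd_of_dvd_mul_right hmj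
    have h1 : (m : ℤ) ≤ |u j| := Int.le_of_dvd (abs_pos.mpr hj0) ((dvd_abs _ _).mpr hmuj)
    have h2 : |u j| ≤ (m : ℤ) - 1 := by
      have := hu j
      rw [Int.abs_eq_natAbs]
      omega
    omega
  -- eventual value of mnorm
  have hev : ∀ n, j < n → mnorm m (∑ k ∈ Finset.range n, ((m : ℚ) / ((m : ℚ) + 1)) ^ k * (u k : ℚ))
      = (m : ℝ) ^ (-(j : ℤ)) := by
    intro n hjn
    set q : ℚ := ∑ k ∈ Finset.range n, ((m : ℚ) / ((m : ℚ) + 1)) ^ k * (u k : ℚ) with hq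
    have hqe : q = ((N n : ℤ) : ℚ) / (((((m : ℤ) + 1)^n : ℤ)) : ℚ) := by
      rw [eq_div_iff (by push_cast; positivity)]
      push_cast
      rw [mul_comm]
      have := key n
      push_cast at this
      exact this
    have hd0 : (((m : ℤ) + 1)^n : ℤ) ≠ 0 := by positivity
    obtain ⟨c, hc1, hc2⟩ := Rat.exists_eq_mul_div_num_and_eq_mul_div_den (N n) hd0
    rw [← hqe] at hc1 hc2
    have hcd : c ∣ ((m : ℤ) + 1)^n := Dvd.intro _ hc2.symm
    have hcopc : IsCoprime ((m : ℤ)) c := hcop.pow_right.of_isCoprime_of_dvd_right hcd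
    -- m^j divides q.num
    have hnum1 : (m : ℤ)^j ∣ q.num := by
      have : (m : ℤ)^j ∣ c * q.num := by rw [← hc1]; exact hNdvd n
      exact (hcopc.pow_left).dvd_of_dvd_mul_left this
    have hnum2 : ¬ (m : ℤ)^(j+1) ∣ q.num := by
      intro hcon
      exact hNnot n hjn (hc1 ▸ hcon.mul_left c)
    have hnum0 : q.num ≠ 0 := by
      intro h0
      exact hnum2 (h0 ▸ dvd_zero _)
    have hv : m.maxPowDiv q.num.natAbs = j := by
      have hle : j ≤ m.maxPowDiv q.num.natAbs :=
        (Nat.pow_dvd_iff_le_padicValNat (p := m) (by omega) (Int.natAbs_pos.mpr hnum0).ne').mp (natAbs_dvd_of_int hnum1)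
      have hge : m.maxPowDiv q.num.natAbs ≤ j := by
        by_contra hcon
        push_neg at hcon
        exact hnum2 (int_pow_dvd_of_natAbs
          ((pow_dvd_pow m hcon).trans (Nat.maxPowDiv.pow_dvd)))
      omega
    rw [mnorm, if_neg (Rat.num_ne_zero.mp hnum0), hv]
  -- contradiction with convergence to 0
  have hconst : Filter.Tendsto
      (fun n => mnorm m (∑ k ∈ Finset.range n, ((m : ℚ) / ((m : ℚ) + 1)) ^ k * (u k : ℚ)))
      Filter.atTop (nhds ((m : ℝ) ^ (-(j : ℤ)))) := by
    refine Filter.Tendsto.congr' ?_ tendsto_const_nhds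
    filter_upwards [Filter.eventually_ge_atTop (j + 1)] with n hn
    exact (hev n (by omega)).symm
  have := tendsto_nhds_unique hconst h
  have hne : ((m : ℝ) ^ (-(j : ℤ))) ≠ 0 := zpow_ne_zero _ (by positivity)
  exact hne this

theorem rotation_series_unique (m : ℕ) (hm : 2 ≤ m) :
    (∀ s : ℕ → ℕ, (∀ k, s k ≤ m - 1) →
      Filter.Tendsto
        (fun n => mdist m
          (∑ k ∈ Finset.range n, ((m : ℚ) / ((m : ℚ) + 1)) ^ k * (s k : ℚ)) 0)
        Filter.atTop (nhds 0) →
      ∀ k, s k = 0) ∧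
    (∀ s t : ℕ → ℕ, (∀ k, s k ≤ m - 1) → (∀ k, t k ≤ m - 1) → ∀ L ∈ Dm m,
      Filter.Tendsto
        (fun n => mdist m
          (∑ k ∈ Finset.range n, ((m : ℚ) / ((m : ℚ) + 1)) ^ k * (s k : ℚ)) L)
        Filter.atTop (nhds 0) →
      Filter.Tendsto
        (fun n => mdist m
          (∑ k ∈ Finset.range n, ((m : ℚ) / ((m : ℚ) + 1)) ^ k * (t k : ℚ)) L)
        Filter.atTop (nhds 0) →
      ∀ k, s k = t k) := by
  constructor
  · intro s hs htend k
    have hb : ∀ k, ((s k : ℤ)).natAbs ≤ m - 1 := fun k => by simpa using hs k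
    have ht' : Filter.Tendsto
        (fun n => mnorm m (∑ k ∈ Finset.range n, ((m : ℚ) / ((m : ℚ) + 1)) ^ k
          * (((s k : ℤ) : ℚ))))
        Filter.atTop (nhds 0) := by
      refine htend.congr (fun n => ?_)
      simp [mdist, sub_zero]
    have := core m hm (fun k => (s k : ℤ)) hb ht' k
    exact_mod_cast this
  · intro s t hs ht L _ h1 h2 k
    have hb : ∀ k, ((s k : ℤ) - (t k : ℤ)).natAbs ≤ m - 1 := fun k => by
      have := hs k; have := ht k; omega
    set S : ℕ → ℚ := fun n => ∑ k ∈ Finset.range n, ((m : ℚ) / ((m : ℚ) + 1)) ^ k * (s k : ℚ)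
      with hS
    set T : ℕ → ℚ := fun n => ∑ k ∈ Finset.range n, ((m : ℚ) / ((m : ℚ) + 1)) ^ k * (t k : ℚ)
      with hT
    have hsum : ∀ n, (∑ k ∈ Finset.range n, ((m : ℚ) / ((m : ℚ) + 1)) ^ k
        * ((((s k : ℤ) - (t k : ℤ)) : ℤ) : ℚ)) = S n - T n := by
      intro n
      rw [hS, hT, ← Finset.sum_sub_distrib]
      refine Finset.sum_congr rfl (fun j _ => ?_)
      push_cast
      ring
    have htd : Filter.Tendsto
        (fun n => mnorm m (∑ k ∈ Finset.range n, ((m : ℚ) / ((m : ℚ) + 1)) ^ k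
          * ((((s k : ℤ) - (t k : ℤ)) : ℤ) : ℚ)))
        Filter.atTop (nhds 0) := by
      have hg : Filter.Tendsto (fun n => mdist m (S n) L + mdist m (T n) L)
          Filter.atTop (nhds 0) := by
        simpa using h1.add h2
      refine squeeze_zero (fun n => mnorm_nonneg m _) (fun n => ?_) hg
      rw [hsum n]
      have hrw : S n - T n = (S n - L) + (L - T n) := by ring
      rw [hrw]
      have hle := mnorm_add_le hm (S n - L) (L - T n)
      have : mnorm m (L - T n) = mnorm m (T n - L) := by
        rw [← neg_sub (T n) L, mnorm_neg]
      rw [this] at hle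
      exact hle
    have := core m hm (fun k => (s k : ℤ) - (t k : ℤ)) hb htd k
    omega
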